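/- Let α, β ≥ 1 be integers with αβ > 1. Define R^h_1 and R^h_2 by the linear recursions R^h_1 = (α+1) R^{h-1}_2 − α R^{h-2}_1 and R^h_2 = (β+1) R^{h-1}_1 − β R^{h-2}_2, with appropriate initial conditions R^1_1 = α+1, R^1_2 = β+1, R^2_1 = (α+1)β + 1, R^2_2 = (β+1)α + 1. Then for all k ≥ 1, R^{2k}_1 = ((αβ)^k − 1)/(αβ − 1) · (α+1)β + 1 and R^{2k+1}_1 = ((αβ)^{k+1} − 1)/(αβ − 1) · (α+1). -/

import Mathlib

/-- Explicit solution of the bi-regular tree recursion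
`R^h_1 = (α+1) R^{h-1}_2 − α R^{h-2}_1`, `R^h_2 = (β+1) R^{h-1}_1 − β R^{h-2}_2`
with initial values `R^1_1 = α+1`, `R^1_2 = β+1`, `R^2_1 = (α+1)β+1`,
`R^2_2 = (β+1)α+1`:
`R^{2k}_1 = ((αβ)^k − 1)/(αβ − 1) · (α+1)β + 1` and
`R^{2k+1}_1 = ((αβ)^{k+1} − 1)/(αβ − 1) · (α+1)`. -/
theorem biregular_root_order (α β : ℕ) (hα : 1 ≤ α) (hβ : 1 ≤ β)
    (hαβ : 1 < α * β) (R1 R2 : ℕ → ℤ)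
    (h11 : R1 1 = α + 1) (h21 : R2 1 = β + 1)
    (h12 : R1 2 = (α + 1) * β + 1) (h22 : R2 2 = (β + 1) * α + 1)
    (hr1 : ∀ h, 3 ≤ h → R1 h = (α + 1) * R2 (h - 1) - α * R1 (h - 2))
    (hr2 : ∀ h, 3 ≤ h → R2 h = (β + 1) * R1 (h - 1) - β * R2 (h - 2)) :
    ∀ k, 1 ≤ k →
      ((R1 (2 * k) : ℚ) =
        (((α : ℚ) * β) ^ k - 1) / ((α : ℚ) * β - 1) * (α + 1) * β + 1) ∧
      ((R1 (2 * k + 1) : ℚ) =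
        (((α : ℚ) * β) ^ (k + 1) - 1) / ((α : ℚ) * β - 1) * (α + 1)) := by
  have hne : (α : ℚ) * β - 1 ≠ 0 := by
    have : (1 : ℚ) < (α : ℚ) * β := by exact_mod_cast hαβ
    intro h; nlinarith
  have main : ∀ k, 1 ≤ k →
      ((R1 (2 * k) : ℚ) =
        (((α : ℚ) * β) ^ k - 1) / ((α : ℚ) * β - 1) * (α + 1) * β + 1) ∧
      ((R1 (2 * k + 1) : ℚ) =
        (((α : ℚ) * β) ^ (k + 1) - 1) / ((α : ℚ) * β - 1) * (α + 1)) ∧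
      ((R2 (2 * k) : ℚ) =
        (((α : ℚ) * β) ^ k - 1) / ((α : ℚ) * β - 1) * (β + 1) * α + 1) ∧
      ((R2 (2 * k + 1) : ℚ) =
        (((α : ℚ) * β) ^ (k + 1) - 1) / ((α : ℚ) * β - 1) * (β + 1)) := by
    intro k hk
    induction k with
    | zero => omega
    | succ n ih =>
      rcases Nat.eq_or_lt_of_le hk with h1 | h1
      · -- n + 1 = 1
        have hn : n = 0 := by omega
        subst hn
        have e13 := hr1 3 (by norm_num)
        have e23 := hr2 3 (by norm_num)
        norm_num at e13 e23 ⊢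
        rw [e13, e23, h12, h22, h21, h11]
        push_cast
        refine ⟨?_, ?_, ?_, ?_⟩ <;> field_simp [show (β : ℚ) * α - 1 ≠ 0 by rwa [mul_comm]] <;> ring
      · have hn : 1 ≤ n := by omega
        obtain ⟨H10, H11, H20, H21⟩ := ih hn
        have e1 := hr1 (2 * n + 2) (by omega)
        have e2 := hr2 (2 * n + 2) (by omega)
        have e3 := hr1 (2 * n + 3) (by omega)
        have e4 := hr2 (2 * n + 3) (by omega)
        norm_num at e1 e2 e3 e4
        have E1 : (R1 (2 * n + 2) : ℚ) = (α + 1) * R2 (2 * n + 1) - α * R1 (2 * n) := by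
          rw [e1]; push_cast; ring
        have E2 : (R2 (2 * n + 2) : ℚ) = (β + 1) * R1 (2 * n + 1) - β * R2 (2 * n) := by
          rw [e2]; push_cast; ring
        have E3 : (R1 (2 * n + 3) : ℚ) = (α + 1) * R2 (2 * n + 2) - α * R1 (2 * n + 1) := by
          rw [e3]; push_cast; ring
        have E4 : (R2 (2 * n + 3) : ℚ) = (β + 1) * R1 (2 * n + 2) - β * R2 (2 * n + 1) := by
          rw [e4]; push_cast; ring
        have G1 : (R1 (2 * n + 2) : ℚ) =
            (((α : ℚ) * β) ^ (n + 1) - 1) / ((α : ℚ) * β - 1) * (α + 1) * β + 1 := by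
          rw [E1, H21, H10]; field_simp; ring
        have G2 : (R2 (2 * n + 2) : ℚ) =
            (((α : ℚ) * β) ^ (n + 1) - 1) / ((α : ℚ) * β - 1) * (β + 1) * α + 1 := by
          rw [E2, H11, H20]; field_simp [show (β : ℚ) * α - 1 ≠ 0 by rwa [mul_comm]]; ring
        have G3 : (R1 (2 * n + 3) : ℚ) =
            (((α : ℚ) * β) ^ (n + 2) - 1) / ((α : ℚ) * β - 1) * (α + 1) := by
          rw [E3, G2, H11]; field_simp; ring
        have G4 : (R2 (2 * n + 3) : ℚ) =
            (((α : ℚ) * β) ^ (n + 2) - 1) / ((α : ℚ) * β - 1) * (β + 1) := by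
          rw [E4, G1, H21]; field_simp [show (β : ℚ) * α - 1 ≠ 0 by rwa [mul_comm]]; ring
        constructor
        · show (R1 (2 * (n + 1)) : ℚ) = _
          rw [show 2 * (n + 1) = 2 * n + 2 from by ring, G1]
        refine ⟨?_, ?_, ?_⟩
        · rw [show 2 * (n + 1) + 1 = 2 * n + 3 from by ring, G3]
        · rw [show 2 * (n + 1) = 2 * n + 2 from by ring, G2]
        · rw [show 2 * (n + 1) + 1 = 2 * n + 3 from by ring, G4]
  intro k hk
  exact ⟨(main k hk).1, (main k hk).2.1⟩
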